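/- For every fixed real polynomial P and every ε > 0, the vector a ∈ ℝ^N with entries a(k) = (P(t_k) - P(√ω k)) · (ω/π)^{1/4} e^{-ω k²/2}, where t_k = (2/√ω) sin(ω k/2), satisfies ‖a‖ = O(N^{-1+ε}) as N → ∞. -/

import Mathlib

open Real Finset Filter Asymptotics

/-- The centered index set `I_N = {-⌈N/2⌉+1, ..., ⌊N/2⌋}`. -/
noncomputable def In (N : ℕ) : Finset ℤ := Finset.Icc (1 - ((N : ℤ) + 1) / 2) ((N : ℤ) / 2)

/-- `t_k = (2/√ω) sin(ω k / 2)` with `ω = 2π/N`. -/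
noncomputable def t (N : ℕ) (k : ℤ) : ℝ := (2 / Real.sqrt (2 * π / N)) * Real.sin (π * k / N)

lemma lemA (x : ℝ) : |Real.sin x - x| ≤ 2 * |x|^3 := by
  rcases le_or_gt |x| 1 with h | h
  · have h1 := Real.sin_bound h
    have h2 : |Real.sin x - x| ≤ |Real.sin x - (x - x^3/6)| + |x^3/6| := by
      have he : Real.sin x - x = (Real.sin x - (x - x^3/6)) + (-(x^3/6)) := by ring
      calc |Real.sin x - x| = |(Real.sin x - (x - x^3/6)) + (-(x^3/6))| := by rw [← he]
        _ ≤ |Real.sin x - (x - x^3/6)| + |(-(x^3/6))| := abs_add_le _ _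
        _ = |Real.sin x - (x - x^3/6)| + |x^3/6| := by rw [abs_neg]
    have h3 : |x^3/6| = |x|^3/6 := by rw [abs_div, abs_pow]; norm_num
    have h4 : |x|^4 ≤ |x|^3 := by
      have hn := abs_nonneg x
      calc |x|^4 = |x|^3 * |x| := by ring
        _ ≤ |x|^3 * 1 := by nlinarith [pow_nonneg hn 3]
        _ = |x|^3 := by ring
    nlinarith [abs_nonneg x, pow_nonneg (abs_nonneg x) 3]
  · have h1 : |Real.sin x - x| ≤ |Real.sin x| + |x| := abs_sub _ _
    have h2 : |Real.sin x| ≤ 1 := Real.abs_sin_le_one x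
    have h3 : |x| ≤ |x|^3 := by nlinarith [mul_nonneg (mul_nonneg (abs_nonneg x) (by linarith : (0:ℝ) ≤ |x| - 1)) (by linarith : (0:ℝ) ≤ |x| + 1)]
    nlinarith [abs_nonneg x]

lemma geom_range_le {r : ℝ} (h0 : 0 ≤ r) (h1 : r < 1) (n : ℕ) :
    ∑ j ∈ range n, r^j ≤ 1/(1-r) := by
  have hr1 : (0:ℝ) < 1 - r := by linarith
  rw [geom_sum_eq (by linarith : r ≠ 1)]
  have he : (r^n - 1)/(r-1) = (1 - r^n)/(1-r) := by
    rw [div_eq_div_iff (by linarith) (by linarith)]; ring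
  rw [he, div_le_div_iff₀ hr1 hr1]
  nlinarith [pow_nonneg h0 n]

lemma lemG {r : ℝ} (h0 : 0 ≤ r) (h1 : r < 1) (N : ℕ) :
    ∑ k ∈ Finset.Icc (-(N:ℤ)) N, r^(k.natAbs) ≤ 2/(1-r) := by
  have hsplit : Finset.Icc (-(N:ℤ)) (N:ℤ) = Finset.Icc (-(N:ℤ)) (-1) ∪ Finset.Icc 0 (N:ℤ) := by
    ext k; simp only [Finset.mem_union, Finset.mem_Icc]; (try dsimp only); omega
  have hdisj : Disjoint (Finset.Icc (-(N:ℤ)) (-1)) (Finset.Icc 0 (N:ℤ)) := by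
    rw [Finset.disjoint_left]; intro k hk hk'
    simp only [Finset.mem_Icc] at hk hk'; (try dsimp only); omega
  rw [hsplit, Finset.sum_union hdisj]
  have hneg : ∑ k ∈ Finset.Icc (-(N:ℤ)) (-1), r^(k.natAbs) = ∑ j ∈ range N, r^(j+1) := by
    refine Finset.sum_nbij' (fun k => k.natAbs - 1) (fun j => -((j:ℤ)+1)) ?_ ?_ ?_ ?_ ?_
    · intro k hk; simp only [Finset.mem_Icc] at hk; simp only [Finset.mem_range]; (try dsimp only); omega
    · intro j hj; simp only [Finset.mem_range] at hj; simp only [Finset.mem_Icc]; (try dsimp only); omega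
    · intro k hk; simp only [Finset.mem_Icc] at hk; (try dsimp only); omega
    · intro j hj; simp only [Finset.mem_range] at hj; (try dsimp only); omega
    · intro k hk; simp only [Finset.mem_Icc] at hk; congr 1; (try dsimp only); omega
  have hpos : ∑ k ∈ Finset.Icc 0 (N:ℤ), r^(k.natAbs) = ∑ j ∈ range (N+1), r^j := by
    refine Finset.sum_nbij' (fun k => k.natAbs) (fun j => (j:ℤ)) ?_ ?_ ?_ ?_ ?_
    · intro k hk; simp only [Finset.mem_Icc] at hk; simp only [Finset.mem_range]; (try dsimp only); omega
    · intro j hj; simp only [Finset.mem_range] at hj; simp only [Finset.mem_Icc]; (try dsimp only); omega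
    · intro k hk; simp only [Finset.mem_Icc] at hk; (try dsimp only); omega
    · intro j hj; simp
    · intro k hk; rfl
  rw [hneg, hpos]
  have b1 : ∑ j ∈ range N, r^(j+1) ≤ 1/(1-r) := by
    calc ∑ j ∈ range N, r^(j+1) ≤ ∑ j ∈ range N, r^j := by
          apply Finset.sum_le_sum; intro j _
          exact pow_le_pow_of_le_one h0 h1.le (by omega)
      _ ≤ 1/(1-r) := geom_range_le h0 h1 N
  have b2 := geom_range_le h0 h1 (N+1)
  have : 2/(1-r) = 1/(1-r) + 1/(1-r) := by ring
  linarith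

lemma lemF (N : ℕ) (hN : 1 ≤ N) :
    ∑ k ∈ In N, Real.exp (-(2*π/N) * (k:ℝ)^2 / 2) ≤ (4 * Real.exp π) * Real.sqrt N := by
  have hN0 : (0:ℝ) < N := by exact_mod_cast hN
  set sN := Real.sqrt N with hsN
  have hsN2 : sN^2 = N := Real.sq_sqrt hN0.le
  have hsNpos : 0 < sN := Real.sqrt_pos.mpr hN0
  have hsN1 : 1 ≤ sN := by
    rw [hsN, show (1:ℝ) = Real.sqrt 1 by simp]
    exact Real.sqrt_le_sqrt (by exact_mod_cast hN)
  set r := Real.exp (-(2*π/sN)) with hr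
  have hr0 : 0 < r := Real.exp_pos _
  have hr1 : r < 1 := by
    rw [hr, Real.exp_lt_one_iff]
    have := Real.pi_pos
    have h2 : 0 < 2*π/sN := by positivity
    linarith
  have hterm : ∀ k : ℤ, Real.exp (-(2*π/N) * (k:ℝ)^2 / 2) ≤ Real.exp π * r^(k.natAbs) := by
    intro k
    have ha : ((k.natAbs : ℝ))^2 = (k:ℝ)^2 := by
      rw [show ((k.natAbs : ℝ)) = |(k:ℝ)| by rw [← Int.cast_natCast, Int.natCast_natAbs, Int.cast_abs]]
      exact sq_abs _
    set a := ((k.natAbs : ℝ)) with haa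
    have ha0 : 0 ≤ a := by positivity
    have hexp : -(2*π/N) * (k:ℝ)^2 / 2 ≤ π + (k.natAbs : ℕ) * (-(2*π/sN)) := by
      rw [← ha, ← haa]
      have hpi := Real.pi_pos
      set b := a / sN with hb
      have e1 : -(2*π/N) * a^2/2 = -(π * b^2) := by
        rw [← hsN2, hb]; field_simp
      have e2 : a * (-(2*π/sN)) = -(2*π*b) := by
        rw [hb]; field_simp
      rw [e1, e2]
      nlinarith [sq_nonneg (b-1)]
    calc Real.exp (-(2*π/N) * (k:ℝ)^2 / 2) ≤ Real.exp (π + (k.natAbs : ℕ) * (-(2*π/sN))) :=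
          Real.exp_le_exp.mpr hexp
      _ = Real.exp π * r^(k.natAbs) := by
          rw [Real.exp_add, Real.exp_nat_mul]
  have hsub : In N ⊆ Finset.Icc (-(N:ℤ)) N := by
    intro k hk
    simp only [In, Finset.mem_Icc] at hk ⊢
    omega
  have hdenom : 2/(1-r) ≤ 4 * sN := by
    set x := 2*π/sN with hx
    have hpi := Real.pi_pos
    have hxpos : 0 < x := by positivity
    have h1 : 1 + x ≤ Real.exp x := by linarith [Real.add_one_le_exp x]
    have hrle : r ≤ 1/(1+x) := by
      rw [hr, Real.exp_neg, one_div]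
      exact inv_anti₀ (by linarith) h1
    have hfrac : 0 < x/(1+x) := by positivity
    have h2 : x/(1+x) ≤ 1 - r := by
      have he : 1 - 1/(1+x) = x/(1+x) := by field_simp; ring
      linarith [hrle, he.ge]
    have h3 : 2/(1-r) ≤ 2/(x/(1+x)) := div_le_div_of_nonneg_left (by norm_num) hfrac h2
    have h4 : 2/(x/(1+x)) = sN/π + 2 := by
      rw [hx]; field_simp
    have h5 : sN/π ≤ sN := div_le_self hsNpos.le (by linarith [Real.pi_gt_three])
    linarith
  calc ∑ k ∈ In N, Real.exp (-(2*π/N) * (k:ℝ)^2 / 2)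
      ≤ ∑ k ∈ In N, Real.exp π * r^(k.natAbs) := Finset.sum_le_sum (fun k _ => hterm k)
    _ ≤ ∑ k ∈ Finset.Icc (-(N:ℤ)) N, Real.exp π * r^(k.natAbs) :=
        Finset.sum_le_sum_of_subset_of_nonneg hsub (fun k _ _ => by positivity)
    _ = Real.exp π * ∑ k ∈ Finset.Icc (-(N:ℤ)) N, r^(k.natAbs) := by rw [Finset.mul_sum]
    _ ≤ Real.exp π * (2/(1-r)) :=
        mul_le_mul_of_nonneg_left (lemG hr0.le hr1 N) (Real.exp_pos π).le
    _ ≤ Real.exp π * (4 * sN) := mul_le_mul_of_nonneg_left hdenom (Real.exp_pos π).le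
    _ = (4 * Real.exp π) * sN := by ring

lemma lemE (m : ℕ) (u : ℝ) (hu : 0 ≤ u) :
    (1+u)^m ≤ (4^m * m.factorial) * Real.exp (u^2/2) := by
  have hM : (2:ℝ)^m ≤ 4^m * m.factorial := by
    have h1 : (2:ℝ)^m ≤ 4^m := pow_le_pow_left₀ (by norm_num) (by norm_num) m
    have h2 : (1:ℝ) ≤ m.factorial := by exact_mod_cast Nat.one_le_iff_ne_zero.mpr m.factorial_ne_zero
    nlinarith [pow_nonneg (by norm_num : (0:ℝ) ≤ 4) m]
  have hexp1 : (1:ℝ) ≤ Real.exp (u^2/2) := Real.one_le_exp (by positivity)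
  rcases le_or_gt u 1 with h | h
  · calc (1+u)^m ≤ 2^m := pow_le_pow_left₀ (by linarith) (by linarith) m
      _ ≤ 4^m * m.factorial := hM
      _ ≤ 4^m * m.factorial * Real.exp (u^2/2) := le_mul_of_one_le_right (by positivity) hexp1
  · have key : (u^2/2)^m ≤ m.factorial * Real.exp (u^2/2) := by
      have h1 : (u^2/2)^m / m.factorial ≤ Real.exp (u^2/2) := by
        calc (u^2/2)^m / m.factorial ≤ ∑ i ∈ range (m+1), (u^2/2)^i / i.factorial := by
              exact Finset.single_le_sum (f := fun i => (u^2/2)^i / (i.factorial:ℝ))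
                (fun i _ => by positivity) (Finset.self_mem_range_succ m)
          _ ≤ Real.exp (u^2/2) := Real.sum_le_exp_of_nonneg (by positivity) _
      have hf : (0:ℝ) < m.factorial := by exact_mod_cast m.factorial_pos
      calc (u^2/2)^m = m.factorial * ((u^2/2)^m / m.factorial) := by field_simp
        _ ≤ m.factorial * Real.exp (u^2/2) := by
            exact mul_le_mul_of_nonneg_left h1 hf.le
    calc (1+u)^m ≤ (2*u)^m := pow_le_pow_left₀ (by linarith) (by linarith) m
      _ = 2^m * u^m := mul_pow 2 u m
      _ ≤ 2^m * u^(2*m) := by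
          apply mul_le_mul_of_nonneg_left _ (by positivity)
          exact pow_le_pow_right₀ h.le (by omega)
      _ = 2^m * ((u^2)^m) := by rw [pow_mul]
      _ = 4^m * (u^2/2)^m := by
          rw [div_pow]
          have : (4:ℝ)^m = 2^m * 2^m := by rw [← mul_pow]; norm_num
          rw [this]
          field_simp
      _ ≤ 4^m * (m.factorial * Real.exp (u^2/2)) := mul_le_mul_of_nonneg_left key (by positivity)
      _ = 4^m * m.factorial * Real.exp (u^2/2) := by ring

lemma lemB (P : Polynomial ℝ) : ∃ C : ℝ, 0 ≤ C ∧ ∀ (R x y : ℝ), 0 ≤ R → |x| ≤ R → |y| ≤ R →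
    |P.eval x - P.eval y| ≤ C * (1+R)^P.natDegree * |x - y| := by
  set d := P.natDegree with hd
  refine ⟨∑ i ∈ range (d+1), |P.coeff i| * i, by positivity, fun R x y hR hx hy => ?_⟩
  have hR1 : (1:ℝ) ≤ 1 + R := by linarith
  have hex := Polynomial.eval_eq_sum_range (p := P) x
  have hey := Polynomial.eval_eq_sum_range (p := P) y
  rw [hex, hey, ← Finset.sum_sub_distrib]
  calc |∑ i ∈ range (d+1), (P.coeff i * x^i - P.coeff i * y^i)|
      ≤ ∑ i ∈ range (d+1), |P.coeff i * x^i - P.coeff i * y^i| := Finset.abs_sum_le_sum_abs _ _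
    _ ≤ ∑ i ∈ range (d+1), |P.coeff i| * i * ((1+R)^d * |x - y|) := by
        apply Finset.sum_le_sum
        intro i hi
        have hid : i ≤ d := Nat.lt_succ_iff.mp (Finset.mem_range.mp hi)
        have key : |x^i - y^i| ≤ i * ((1+R)^d * |x-y|) := by
          have hgeo := geom_sum₂_mul x y i
          rw [← hgeo, abs_mul]
          have hsum : |∑ j ∈ range i, x^j * y^(i-1-j)| ≤ i * (1+R)^d := by
            calc |∑ j ∈ range i, x^j * y^(i-1-j)| ≤ ∑ j ∈ range i, |x^j * y^(i-1-j)| :=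
                  Finset.abs_sum_le_sum_abs _ _
              _ ≤ ∑ j ∈ range i, (1+R)^d := by
                  apply Finset.sum_le_sum
                  intro j hj
                  have hji : j < i := Finset.mem_range.mp hj
                  have h1 : |x^j * y^(i-1-j)| = |x|^j * |y|^(i-1-j) := by
                    rw [abs_mul, abs_pow, abs_pow]
                  rw [h1]
                  have h2 : |x|^j * |y|^(i-1-j) ≤ R^j * R^(i-1-j) := by
                    apply mul_le_mul (pow_le_pow_left₀ (abs_nonneg x) hx j)
                      (pow_le_pow_left₀ (abs_nonneg y) hy _) (by positivity) (by positivity)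
                  have h3 : R^j * R^(i-1-j) = R^(i-1) := by
                    rw [← pow_add]
                    congr 1
                    omega
                  calc |x|^j * |y|^(i-1-j) ≤ R^(i-1) := by rw [← h3]; exact h2
                    _ ≤ (1+R)^(i-1) := pow_le_pow_left₀ hR (by linarith) _
                    _ ≤ (1+R)^d := pow_le_pow_right₀ hR1 (by omega)
              _ = i * (1+R)^d := by rw [Finset.sum_const, Finset.card_range]; simp [nsmul_eq_mul]
          calc |∑ j ∈ range i, x^j * y^(i-1-j)| * |x - y| ≤ (i * (1+R)^d) * |x-y| :=
                mul_le_mul_of_nonneg_right hsum (abs_nonneg _)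
            _ = i * ((1+R)^d * |x-y|) := by ring
        calc |P.coeff i * x^i - P.coeff i * y^i| = |P.coeff i| * |x^i - y^i| := by
              rw [← mul_sub, abs_mul]
          _ ≤ |P.coeff i| * (i * ((1+R)^d * |x-y|)) :=
              mul_le_mul_of_nonneg_left key (abs_nonneg _)
          _ = |P.coeff i| * i * ((1+R)^d * |x-y|) := by ring
    _ = (∑ i ∈ range (d+1), |P.coeff i| * i) * (1+R)^d * |x - y| := by
        rw [← Finset.sum_mul]; ring

lemma term_bound (P : Polynomial ℝ) (C : ℝ) (hC0 : 0 ≤ C)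
    (hC : ∀ (R x y : ℝ), 0 ≤ R → |x| ≤ R → |y| ≤ R →
      |P.eval x - P.eval y| ≤ C * (1+R)^P.natDegree * |x - y|)
    (N : ℕ) (hN : 1 ≤ N) (k : ℤ) :
    ((P.eval (t N k) - P.eval (Real.sqrt (2 * π / N) * k)) *
          ((2 * π / N) / π) ^ ((1 : ℝ) / 4) * Real.exp (-(2 * π / N) * (k:ℝ) ^ 2 / 2)) ^ 2
      ≤ 2*π^2*C^2*(4^(2*P.natDegree+6) * ((2*P.natDegree+6).factorial : ℝ)) / ((N:ℝ)^2 * Real.sqrt N)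
        * Real.exp (-(2 * π / N) * (k:ℝ)^2 / 2) := by
  have hpi := Real.pi_pos
  have hN0 : (0:ℝ) < N := by exact_mod_cast hN
  set d := P.natDegree with hd
  set s := Real.sqrt (2 * π / N) with hs
  have hs2 : s^2 = 2*π/N := Real.sq_sqrt (by positivity)
  have hspos : 0 < s := Real.sqrt_pos.mpr (by positivity)
  set x := π * (k:ℝ) / N with hx
  set a := |(k:ℝ)| with ha
  have ha0 : 0 ≤ a := abs_nonneg _
  -- |x| in terms of s and a
  have hxabs : |x| = (s^2/2) * a := by
    rw [hx, abs_div, abs_mul, abs_of_pos hpi, abs_of_pos hN0, hs2, ha]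
    ring
  -- s * k = (2/s) * x
  have hs2N : s^2 * N = 2*π := by rw [hs2]; field_simp
  have hsk : s * (k:ℝ) = (2/s) * x := by
    rw [hx]
    field_simp
    linear_combination (k:ℝ) * hs2N
  -- bound on |t N k - s k|
  have htd : |t N k - s * k| ≤ s^5 * a^3 / 2 := by
    have he : t N k - s * k = (2/s) * (Real.sin x - x) := by
      rw [t, ← hs, ← hx, hsk]; ring
    rw [he, abs_mul, abs_of_pos (by positivity : (0:ℝ) < 2/s)]
    calc (2/s) * |Real.sin x - x| ≤ (2/s) * (2 * |x|^3) :=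
          mul_le_mul_of_nonneg_left (lemA x) (by positivity)
      _ = (2/s) * (2 * ((s^2/2)*a)^3) := by rw [hxabs]
      _ = s^5 * a^3 / 2 := by field_simp
  -- bound on |t N k|
  have htb : |t N k| ≤ s * a := by
    have he : t N k = (2/s) * Real.sin x := by rw [t, ← hs, ← hx]
    rw [he, abs_mul, abs_of_pos (by positivity : (0:ℝ) < 2/s)]
    calc (2/s) * |Real.sin x| ≤ (2/s) * |x| :=
          mul_le_mul_of_nonneg_left (Real.abs_sin_le_abs) (by positivity)
      _ = (2/s) * ((s^2/2)*a) := by rw [hxabs]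
      _ = s * a := by field_simp
  have hskb : |s * (k:ℝ)| = s * a := by rw [abs_mul, abs_of_pos hspos, ha]
  set u := s * a with hu
  have hu0 : 0 ≤ u := by positivity
  -- polynomial difference bound
  have hpd : |P.eval (t N k) - P.eval (s * k)| ≤ C * (1+u)^d * (s^5 * a^3 / 2) := by
    have h1 := hC u (t N k) (s * k) hu0 htb (le_of_eq hskb)
    calc |P.eval (t N k) - P.eval (s * k)| ≤ C * (1+u)^d * |t N k - s*k| := h1
      _ ≤ C * (1+u)^d * (s^5 * a^3 / 2) := by
          apply mul_le_mul_of_nonneg_left htd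
          positivity
  -- notation
  set A := P.eval (t N k) - P.eval (s * k) with hA
  set G := Real.exp (-(2 * π / N) * (k:ℝ)^2 / 2) with hG
  set M : ℝ := 4^(2*d+6) * ((2*d+6).factorial : ℝ) with hM
  have hM0 : (0:ℝ) < M := by positivity
  have hGpos : (0:ℝ) < G := Real.exp_pos _
  have hu2 : u^2 = (2*π/N) * (k:ℝ)^2 := by
    rw [hu, mul_pow, hs2, ha, sq_abs]
  have hG2 : G^2 = Real.exp (-(u^2)) := by
    rw [hG, sq, ← Real.exp_add]
    congr 1
    rw [hu2]; ring
  -- the prefactor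
  have hFeq : ((2 * π / N) / π : ℝ) = 2 / N := by field_simp
  set F := ((2 * π / N) / π : ℝ) ^ ((1:ℝ)/4) with hF
  have hF0 : 0 ≤ F := Real.rpow_nonneg (by positivity) _
  have hsqrtN : (0:ℝ) < Real.sqrt N := Real.sqrt_pos.mpr hN0
  have hF2 : F^2 ≤ 2 / Real.sqrt N := by
    have e1 : F^2 = ((2:ℝ)/N) ^ ((1:ℝ)/2) := by
      rw [hF, hFeq, ← Real.rpow_natCast (((2:ℝ)/N) ^ ((1:ℝ)/4)) 2, ← Real.rpow_mul (by positivity)]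
      norm_num
    have e2 : ((2:ℝ)/N) ^ ((1:ℝ)/2) = Real.sqrt 2 / Real.sqrt N := by
      rw [← Real.sqrt_eq_rpow, Real.sqrt_div (by norm_num : (0:ℝ) ≤ 2)]
    have e3 : Real.sqrt 2 ≤ 2 := by
      have h := Real.sqrt_le_sqrt (show (2:ℝ) ≤ 4 by norm_num)
      rwa [show Real.sqrt 4 = 2 by
        rw [show (4:ℝ) = 2^2 by norm_num, Real.sqrt_sq (by norm_num : (0:ℝ) ≤ 2)]] at h
    rw [e1, e2]
    gcongr
  -- gaussian absorption
  have habs : (1+u)^(2*d) * u^6 * G^2 ≤ M * Real.exp (-(u^2)/2) := by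
    have h1 : (1+u)^(2*d) * u^6 ≤ (1+u)^(2*d+6) := by
      rw [pow_add]
      apply mul_le_mul_of_nonneg_left _ (by positivity)
      exact pow_le_pow_left₀ hu0 (by linarith) 6
    have h2 := lemE (2*d+6) u hu0
    calc (1+u)^(2*d) * u^6 * G^2 ≤ (1+u)^(2*d+6) * G^2 :=
          mul_le_mul_of_nonneg_right h1 (by positivity)
      _ ≤ (M * Real.exp (u^2/2)) * G^2 := mul_le_mul_of_nonneg_right h2 (by positivity)
      _ = M * Real.exp (-(u^2)/2) := by
          rw [hG2, mul_assoc, ← Real.exp_add]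
          congr 2
          ring
  -- assemble
  have hA2 : A^2 ≤ (C * (1+u)^d * (s^5 * a^3 / 2))^2 := by
    rw [← sq_abs A]
    exact pow_le_pow_left₀ (abs_nonneg _) hpd 2
  calc (A * F * G)^2 = A^2 * (F^2 * G^2) := by ring
    _ ≤ (C * (1+u)^d * (s^5 * a^3 / 2))^2 * (F^2 * G^2) :=
        mul_le_mul_of_nonneg_right hA2 (by positivity)
    _ = (C^2/4) * s^4 * ((1+u)^(2*d) * u^6 * G^2) * F^2 := by
        have e1 : (1+u)^(2*d) = ((1+u)^d)^2 := by rw [mul_comm 2 d, pow_mul]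
        have e2 : u^6 = s^6 * a^6 := by rw [hu, mul_pow]
        rw [e1, e2]; ring
    _ ≤ (C^2/4) * s^4 * (M * Real.exp (-(u^2)/2)) * F^2 := by
        apply mul_le_mul_of_nonneg_right _ (by positivity)
        exact mul_le_mul_of_nonneg_left habs (by positivity)
    _ ≤ (C^2/4) * s^4 * (M * Real.exp (-(u^2)/2)) * (2 / Real.sqrt N) :=
        mul_le_mul_of_nonneg_left hF2 (by positivity)
    _ = 2*π^2*C^2*M / ((N:ℝ)^2 * Real.sqrt N) * G := by
        have h4 : s^4 = (2*π/N)^2 := by rw [show s^4 = (s^2)^2 by ring, hs2]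
        have hGe : Real.exp (-(u^2)/2) = G := by
          rw [hG]; congr 1; rw [hu2]; ring
        rw [h4, hGe]
        field_simp
        ring

theorem stmt_19 (P : Polynomial ℝ) (ε : ℝ) (hε : 0 < ε) :
    (fun N : ℕ => Real.sqrt (∑ k ∈ In N,
        ((P.eval (t N k) - P.eval (Real.sqrt (2 * π / N) * k)) *
          ((2 * π / N) / π) ^ ((1 : ℝ) / 4) * Real.exp (-(2 * π / N) * k ^ 2 / 2)) ^ 2))
      =O[atTop] fun N : ℕ => (N : ℝ) ^ (-1 + ε) := by
  obtain ⟨C, hC0, hC⟩ := lemB P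
  have hpi := Real.pi_pos
  set D : ℝ := 2*π^2*C^2*(4^(2*P.natDegree+6) * ((2*P.natDegree+6).factorial : ℝ)) with hD
  have hD0 : 0 ≤ D := by positivity
  set K0 : ℝ := D * (4 * Real.exp π) with hK0
  have hK00 : 0 ≤ K0 := by positivity
  rw [isBigO_iff]
  refine ⟨Real.sqrt K0, ?_⟩
  filter_upwards [eventually_ge_atTop 1] with N hN
  have hN0 : (0:ℝ) < N := by exact_mod_cast hN
  have hN1 : (1:ℝ) ≤ N := by exact_mod_cast hN
  have hsqN : (0:ℝ) < Real.sqrt N := Real.sqrt_pos.mpr hN0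
  have hSum : (∑ k ∈ In N,
        ((P.eval (t N k) - P.eval (Real.sqrt (2 * π / N) * k)) *
          ((2 * π / N) / π) ^ ((1 : ℝ) / 4) * Real.exp (-(2 * π / N) * k ^ 2 / 2)) ^ 2)
      ≤ K0 / (N:ℝ)^2 := by
    calc (∑ k ∈ In N,
        ((P.eval (t N k) - P.eval (Real.sqrt (2 * π / N) * k)) *
          ((2 * π / N) / π) ^ ((1 : ℝ) / 4) * Real.exp (-(2 * π / N) * k ^ 2 / 2)) ^ 2)
        ≤ ∑ k ∈ In N, D / ((N:ℝ)^2 * Real.sqrt N) * Real.exp (-(2 * π / N) * (k:ℝ)^2 / 2) :=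
          Finset.sum_le_sum (fun k _ => term_bound P C hC0 hC N hN k)
      _ = D / ((N:ℝ)^2 * Real.sqrt N) * ∑ k ∈ In N, Real.exp (-(2 * π / N) * (k:ℝ)^2 / 2) := by
          rw [← Finset.mul_sum]
      _ ≤ D / ((N:ℝ)^2 * Real.sqrt N) * ((4 * Real.exp π) * Real.sqrt N) :=
          mul_le_mul_of_nonneg_left (lemF N hN) (by positivity)
      _ = K0 / (N:ℝ)^2 := by
          rw [hK0]
          field_simp
  have hsqrt : Real.sqrt (∑ k ∈ In N,
        ((P.eval (t N k) - P.eval (Real.sqrt (2 * π / N) * k)) *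
          ((2 * π / N) / π) ^ ((1 : ℝ) / 4) * Real.exp (-(2 * π / N) * k ^ 2 / 2)) ^ 2)
      ≤ Real.sqrt K0 / N := by
    calc Real.sqrt (∑ k ∈ In N,
        ((P.eval (t N k) - P.eval (Real.sqrt (2 * π / N) * k)) *
          ((2 * π / N) / π) ^ ((1 : ℝ) / 4) * Real.exp (-(2 * π / N) * k ^ 2 / 2)) ^ 2)
        ≤ Real.sqrt (K0 / (N:ℝ)^2) := Real.sqrt_le_sqrt hSum
      _ = Real.sqrt K0 / N := by
          rw [Real.sqrt_div hK00, Real.sqrt_sq hN0.le]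
  rw [Real.norm_eq_abs, Real.norm_eq_abs, abs_of_nonneg (Real.sqrt_nonneg _),
    abs_of_nonneg (Real.rpow_nonneg hN0.le _)]
  calc Real.sqrt (∑ k ∈ In N,
        ((P.eval (t N k) - P.eval (Real.sqrt (2 * π / N) * k)) *
          ((2 * π / N) / π) ^ ((1 : ℝ) / 4) * Real.exp (-(2 * π / N) * k ^ 2 / 2)) ^ 2)
      ≤ Real.sqrt K0 / N := hsqrt
    _ = Real.sqrt K0 * (N:ℝ) ^ (-1:ℝ) := by rw [Real.rpow_neg_one]; ring
    _ ≤ Real.sqrt K0 * (N:ℝ) ^ (-1+ε) := by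
        apply mul_le_mul_of_nonneg_left _ (Real.sqrt_nonneg _)
        exact Real.rpow_le_rpow_of_exponent_le hN1 (by linarith)
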